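/- Fix integers n, m, l, r, c ≥ 1, let E ∈ ℝ^{n×n}, F ∈ ℝ^{n×m}, G ∈ ℝ^{n×l}, H ∈ ℝ^{m×n}, and let (x̂, u, y) be a compensator trajectory. Set Ē = E + F H and fix t ≥ 0. Assume that (i) the observability-type matrix F̄_x = (H; HĒ; …; HĒ^{r−1}) ∈ ℝ^{mr×n} has rank n, and (ii) the (n+lr)×c matrix N whose k-th column (k = 0,…,c−1) is (x̂(t+k) ; Y_r(t+k+1)) has rank min{ n + lr , c }. Then rank(H_{r,c}(t)) = min{ (m+l)r , c , n + lr }. (Rank-equality part of Lemma 1, with the persistency-of-excitation condition on N made explicit.) -/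
import Mathlib


open Matrix

noncomputable section

namespace LQGPaper

variable {n m l : ℕ}

/-- Row block matrix `(E^{n-1}B, E^{n-2}B, …, B) ∈ ℝ^{n×nk}`. -/
def Frow {k : ℕ} (E : Matrix (Fin n) (Fin n) ℝ) (B : Matrix (Fin n) (Fin k) ℝ) :
    Matrix (Fin n) (Fin n × Fin k) ℝ :=
  Matrix.of fun i q => (E ^ (n - 1 - (q.1 : ℕ)) * B) i q.2

/-- Strictly block-lower-triangular matrix (`M̃_u`/`M̃_y` style) whose `(i,j)` block
(0-indexed, blocks of size `n × k`) is `E^{i-j-1} B` for `i > j` and `0` otherwise. -/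
def Mlow {k : ℕ} (E : Matrix (Fin n) (Fin n) ℝ) (B : Matrix (Fin n) (Fin k) ℝ) :
    Matrix (Fin n × Fin n) (Fin n × Fin k) ℝ :=
  Matrix.of fun p q =>
    if (q.1 : ℕ) < (p.1 : ℕ) then (E ^ ((p.1 : ℕ) - (q.1 : ℕ) - 1) * B) p.2 q.2 else 0

/-- Strictly block-lower-triangular matrix (`M_u`/`M_y` style) whose `(i,j)` block
(0-indexed, blocks of size `m × k`) is `H E^{i-j-1} B` for `i > j` and `0` otherwise. -/
def MlowH {k : ℕ} (E : Matrix (Fin n) (Fin n) ℝ) (B : Matrix (Fin n) (Fin k) ℝ)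
    (H : Matrix (Fin m) (Fin n) ℝ) :
    Matrix (Fin n × Fin m) (Fin n × Fin k) ℝ :=
  Matrix.of fun p q =>
    if (q.1 : ℕ) < (p.1 : ℕ) then (H * E ^ ((p.1 : ℕ) - (q.1 : ℕ) - 1) * B) p.2 q.2 else 0

/-- The block column `F_x = (H; HE; …; HE^{n-1}) ∈ ℝ^{mn×n}`. -/
def Fx (E : Matrix (Fin n) (Fin n) ℝ) (H : Matrix (Fin m) (Fin n) ℝ) :
    Matrix (Fin n × Fin m) (Fin n) ℝ :=
  Matrix.of fun p j => (H * E ^ (p.1 : ℕ)) p.2 j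

/-- The selection matrix `P_i = I_n ⊗ e_iᵀ ∈ ℝ^{n×nm}`. -/
def Pmat (n : ℕ) {m : ℕ} (i : Fin m) : Matrix (Fin n) (Fin n × Fin m) ℝ :=
  Matrix.of fun r q => if r = q.1 ∧ q.2 = i then 1 else 0

/-- The Kronecker product `a ⊗ I_q ∈ ℝ^{q×nq}` of a row vector `a ∈ ℝ^{1×n}`
with the identity `I_q`. -/
def aKron (a : Fin n → ℝ) (q : ℕ) : Matrix (Fin q) (Fin n × Fin q) ℝ :=
  Matrix.of fun i p => if i = p.2 then a p.1 else 0

/-- The row vector `a ∈ ℝ^{1×n}` as a `1 × n` matrix. -/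
def aRow (a : Fin n → ℝ) : Matrix (Fin 1) (Fin n) ℝ := Matrix.of fun _ k => a k

/-- The `i`-th row of `H` as a `1 × n` matrix. -/
def Hrow (H : Matrix (Fin m) (Fin n) ℝ) (i : Fin m) : Matrix (Fin 1) (Fin n) ℝ :=
  Matrix.of fun _ j => H i j

/-- The estimation matrix
`L_est = [[F_u − (a⊗I_n)M̃_u , F_y − (a⊗I_n)M̃_y]; [a⊗I_m , 0]] ∈ ℝ^{(n+m)×(m+l)n}`. -/
def Lest (E : Matrix (Fin n) (Fin n) ℝ) (F : Matrix (Fin n) (Fin m) ℝ)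
    (G : Matrix (Fin n) (Fin l) ℝ) (a : Fin n → ℝ) :
    Matrix (Fin n ⊕ Fin m) ((Fin n × Fin m) ⊕ (Fin n × Fin l)) ℝ :=
  Matrix.fromBlocks (Frow E F - aKron a n * Mlow E F) (Frow E G - aKron a n * Mlow E G)
    (aKron a m) 0

/-- A compensator trajectory: `x̂(t+1) = E x̂(t) + F u(t) + G y(t+1)`, `u(t) = H x̂(t)`. -/
def IsCompTraj (E : Matrix (Fin n) (Fin n) ℝ) (F : Matrix (Fin n) (Fin m) ℝ)
    (G : Matrix (Fin n) (Fin l) ℝ) (H : Matrix (Fin m) (Fin n) ℝ)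
    (xh : ℕ → Fin n → ℝ) (u : ℕ → Fin m → ℝ) (y : ℕ → Fin l → ℝ) : Prop :=
  (∀ t, xh (t + 1) = E.mulVec (xh t) + F.mulVec (u t) + G.mulVec (y (t + 1))) ∧
    ∀ t, u t = H.mulVec (xh t)

/-- The stacked vector `(v(t); v(t+1); …; v(t+r-1))`. -/
def stack {k : ℕ} (v : ℕ → Fin k → ℝ) (r t : ℕ) : Fin r × Fin k → ℝ :=
  fun p => v (t + (p.1 : ℕ)) p.2

/-- The block column `F̄_x = (H; HĒ; …; HĒ^{r-1}) ∈ ℝ^{mr×n}`. -/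
def ObsMat {n m : ℕ} (r : ℕ) (Eb : Matrix (Fin n) (Fin n) ℝ)
    (H : Matrix (Fin m) (Fin n) ℝ) : Matrix (Fin r × Fin m) (Fin n) ℝ :=
  Matrix.of fun p j => (H * Eb ^ (p.1 : ℕ)) p.2 j

/-- `F̄_y ∈ ℝ^{mr×lr}`: block matrix whose `(i,j)` block (0-indexed, blocks `m × l`)
is `H Ē^{i-j-1} G` for `i > j` and `0` otherwise. -/
def ToepMat {n m l : ℕ} (r : ℕ) (Eb : Matrix (Fin n) (Fin n) ℝ)
    (G : Matrix (Fin n) (Fin l) ℝ) (H : Matrix (Fin m) (Fin n) ℝ) :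
    Matrix (Fin r × Fin m) (Fin r × Fin l) ℝ :=
  Matrix.of fun p q =>
    if (q.1 : ℕ) < (p.1 : ℕ) then
      (H * Eb ^ ((p.1 : ℕ) - (q.1 : ℕ) - 1) * G) p.2 q.2
    else 0

/-- The input-output data matrix `H_{r,c}(t)` whose `k`-th column is
`(U_r(t+k); Y_r(t+k+1))`. -/
def dataMat {m l : ℕ} (u : ℕ → Fin m → ℝ) (y : ℕ → Fin l → ℝ) (r c t : ℕ) :
    Matrix ((Fin r × Fin m) ⊕ (Fin r × Fin l)) (Fin c) ℝ :=
  Matrix.of fun i k =>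
    Sum.elim (fun p : Fin r × Fin m => u (t + (k : ℕ) + (p.1 : ℕ)) p.2)
      (fun p : Fin r × Fin l => y (t + (k : ℕ) + 1 + (p.1 : ℕ)) p.2) i

/-- The matrix `N` whose `k`-th column is `(x̂(t+k); Y_r(t+k+1))`. -/
def stateMat {n l : ℕ} (xh : ℕ → Fin n → ℝ) (y : ℕ → Fin l → ℝ) (r c t : ℕ) :
    Matrix (Fin n ⊕ (Fin r × Fin l)) (Fin c) ℝ :=
  Matrix.of fun i k =>
    Sum.elim (fun j : Fin n => xh (t + (k : ℕ)) j)
      (fun p : Fin r × Fin l => y (t + (k : ℕ) + 1 + (p.1 : ℕ)) p.2) i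


section AuxRank

lemma rank_mul_eq_of_inj {α β γ : Type*} [Fintype α] [Fintype β] [Fintype γ]
    (M : Matrix α β ℝ) (N : Matrix β γ ℝ) (h : Function.Injective M.mulVecLin) :
    (M * N).rank = N.rank := by
  rw [Matrix.rank, Matrix.rank, Matrix.mulVecLin_mul, LinearMap.range_comp]
  exact ((LinearMap.range N.mulVecLin).equivMapOfInjective _ h).finrank_eq.symm

lemma inj_of_rank_eq {α β : Type*} [Fintype α] [Fintype β]
    (M : Matrix α β ℝ) (h : M.rank = Fintype.card β) :
    Function.Injective M.mulVecLin := by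
  rw [← LinearMap.ker_eq_bot]
  have h2 := LinearMap.finrank_range_add_finrank_ker M.mulVecLin
  rw [Matrix.rank] at h
  rw [h, Module.finrank_pi] at h2
  have : Module.finrank ℝ (LinearMap.ker M.mulVecLin) = 0 := by omega
  exact Submodule.finrank_eq_zero.mp this

end AuxRank

lemma xh_formula {E : Matrix (Fin n) (Fin n) ℝ} {F : Matrix (Fin n) (Fin m) ℝ}
    {G : Matrix (Fin n) (Fin l) ℝ} {H : Matrix (Fin m) (Fin n) ℝ}
    {xh : ℕ → Fin n → ℝ} {u : ℕ → Fin m → ℝ} {y : ℕ → Fin l → ℝ}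
    (htraj : IsCompTraj E F G H xh u y) (s : ℕ) : ∀ i : ℕ,
    xh (s + i) = ((E + F * H) ^ i).mulVec (xh s) +
      ∑ j ∈ Finset.range i, (((E + F * H) ^ (i - 1 - j)) * G).mulVec (y (s + j + 1)) := by
  obtain ⟨h1, h2⟩ := htraj
  intro i
  induction i with
  | zero => simp
  | succ i ih =>
    have step : xh (s + (i + 1)) = (E + F * H).mulVec (xh (s + i)) + G.mulVec (y (s + i + 1)) := by
      have := h1 (s + i)
      rw [show s + (i+1) = s + i + 1 by ring, this, h2 (s + i)]
      rw [Matrix.add_mulVec, ← Matrix.mulVec_mulVec]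
    rw [step, ih, Matrix.mulVec_add, Matrix.mulVec_mulVec, ← pow_succ',
      Finset.sum_range_succ]
    have key : (E + F * H).mulVec
        (∑ j ∈ Finset.range i, (((E + F * H) ^ (i - 1 - j)) * G).mulVec (y (s + j + 1)))
        = ∑ j ∈ Finset.range i, (((E + F * H) ^ (i + 1 - 1 - j)) * G).mulVec (y (s + j + 1)) := by
      rw [← Matrix.mulVecLin_apply, map_sum]
      simp only [Matrix.mulVecLin_apply]
      refine Finset.sum_congr rfl fun j hj => ?_
      rw [Finset.mem_range] at hj
      have hexp : i - 1 - j + 1 = i + 1 - 1 - j := by omega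
      rw [Matrix.mulVec_mulVec, ← Matrix.mul_assoc, ← pow_succ', hexp]
    rw [key]
    simp only [Nat.add_sub_cancel, Nat.sub_self, pow_zero, Matrix.one_mul,
      show s + i + 1 = s + (i + 1) by ring]
    abel

lemma sum_fin_ite {r : ℕ} (p1 : ℕ) (hp : p1 ≤ r) (g : ℕ → ℝ) :
    ∑ q1 : Fin r, (if (q1 : ℕ) < p1 then g (q1 : ℕ) else 0) = ∑ j ∈ Finset.range p1, g j := by
  rw [Fin.sum_univ_eq_sum_range (fun j => if j < p1 then g j else 0) r]
  calc ∑ j ∈ Finset.range r, (if j < p1 then g j else 0)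
      = ∑ j ∈ Finset.range p1, (if j < p1 then g j else 0) :=
        (Finset.sum_subset (Finset.range_subset_range.mpr hp) (fun x _ hnx => by
          rw [Finset.mem_range] at hnx; rw [if_neg hnx])).symm
    _ = ∑ j ∈ Finset.range p1, g j :=
        Finset.sum_congr rfl fun j hj => if_pos (Finset.mem_range.mp hj)

lemma data_factor {E : Matrix (Fin n) (Fin n) ℝ} {F : Matrix (Fin n) (Fin m) ℝ}
    {G : Matrix (Fin n) (Fin l) ℝ} {H : Matrix (Fin m) (Fin n) ℝ}
    {xh : ℕ → Fin n → ℝ} {u : ℕ → Fin m → ℝ} {y : ℕ → Fin l → ℝ}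
    (htraj : IsCompTraj E F G H xh u y) (r c t : ℕ) :
    dataMat u y r c t =
      Matrix.fromBlocks (ObsMat r (E + F * H) H) (ToepMat r (E + F * H) G H) 0 1 *
        stateMat xh y r c t := by
  set Eb := E + F * H with hEb
  ext i k
  cases i with
  | inr p =>
    simp [dataMat, stateMat, Matrix.mul_apply, Fintype.sum_sum_type, Matrix.one_apply,
      ite_mul]
  | inl p =>
    rw [Matrix.mul_apply, Fintype.sum_sum_type]
    simp only [Matrix.fromBlocks_apply₁₁, Matrix.fromBlocks_apply₁₂, stateMat, dataMat,
      Matrix.of_apply, Sum.elim_inl, Sum.elim_inr]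
    have hu := htraj.2 (t + (k : ℕ) + (p.1 : ℕ))
    have hx := xh_formula htraj (t + (k : ℕ)) (p.1 : ℕ)
    rw [hu, hx, Matrix.mulVec_add, Pi.add_apply, Matrix.mulVec_mulVec]
    have e1 : ((H * Eb ^ (p.1 : ℕ)).mulVec (xh (t + (k : ℕ)))) p.2
        = ∑ j : Fin n, ObsMat r Eb H p j * xh (t + (k : ℕ)) j := by
      simp [Matrix.mulVec, dotProduct, ObsMat]
    have e2 : (H.mulVec (∑ j ∈ Finset.range (p.1 : ℕ),
          ((Eb ^ ((p.1 : ℕ) - 1 - j) * G).mulVec (y (t + (k : ℕ) + j + 1))))) p.2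
        = ∑ q : Fin r × Fin l, ToepMat r Eb G H p q * y (t + (k : ℕ) + 1 + (q.1 : ℕ)) q.2 := by
      rw [← Matrix.mulVecLin_apply, map_sum]
      simp only [Matrix.mulVecLin_apply, Matrix.mulVec_mulVec]
      rw [Fintype.sum_prod_type, Finset.sum_apply]
      have hrw : ∀ q1 : Fin r, ∑ q2 : Fin l,
          ToepMat r Eb G H p (q1, q2) * y (t + (k : ℕ) + 1 + (q1 : ℕ)) q2
          = if (q1 : ℕ) < (p.1 : ℕ) then
              ∑ q2 : Fin l, (H * Eb ^ ((p.1 : ℕ) - (q1 : ℕ) - 1) * G) p.2 q2 *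
                y (t + (k : ℕ) + 1 + (q1 : ℕ)) q2
            else 0 := by
        intro q1
        by_cases hlt : (q1 : ℕ) < (p.1 : ℕ)
        · rw [if_pos hlt]
          refine Finset.sum_congr rfl fun q2 _ => ?_
          rw [ToepMat, Matrix.of_apply, if_pos hlt]
        · rw [if_neg hlt]
          refine Finset.sum_eq_zero fun q2 _ => ?_
          rw [ToepMat, Matrix.of_apply, if_neg hlt, zero_mul]
      rw [Finset.sum_congr rfl fun q1 _ => hrw q1]
      rw [sum_fin_ite (p.1 : ℕ) p.1.2.le (fun j => ∑ q2 : Fin l,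
        (H * Eb ^ ((p.1 : ℕ) - j - 1) * G) p.2 q2 * y (t + (k : ℕ) + 1 + j) q2)]
      refine Finset.sum_congr rfl fun j hj => ?_
      rw [Finset.mem_range] at hj
      have h1 : (p.1 : ℕ) - 1 - j = (p.1 : ℕ) - j - 1 := by omega
      have h2 : t + (k : ℕ) + j + 1 = t + (k : ℕ) + 1 + j := by ring
      rw [h1, h2, Matrix.mulVec, dotProduct]
      simp [Matrix.mul_assoc]
    rw [e1, e2]


/-- rank equality part of Lemma 1. -/
theorem data_matrix_rank_eq (n m l r c : ℕ)
    (hn : 1 ≤ n) (hm : 1 ≤ m) (hl : 1 ≤ l) (hr : 1 ≤ r) (hc : 1 ≤ c)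
    (E : Matrix (Fin n) (Fin n) ℝ) (F : Matrix (Fin n) (Fin m) ℝ)
    (G : Matrix (Fin n) (Fin l) ℝ) (H : Matrix (Fin m) (Fin n) ℝ)
    (xh : ℕ → Fin n → ℝ) (u : ℕ → Fin m → ℝ) (y : ℕ → Fin l → ℝ)
    (htraj : IsCompTraj E F G H xh u y) (t : ℕ)
    (hobs : (ObsMat r (E + F * H) H).rank = n)
    (hN : (stateMat xh y r c t).rank = min (n + l * r) c) :
    (dataMat u y r c t).rank = min ((m + l) * r) (min c (n + l * r)) := by
  have hAinj : Function.Injective (ObsMat r (E + F * H) H).mulVecLin := by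
    apply inj_of_rank_eq
    rw [hobs, Fintype.card_fin]
  set M := Matrix.fromBlocks (ObsMat r (E + F * H) H) (ToepMat r (E + F * H) G H) 0
      (1 : Matrix (Fin r × Fin l) (Fin r × Fin l) ℝ) with hM
  have hMinj : Function.Injective M.mulVecLin := by
    rw [← LinearMap.ker_eq_bot, LinearMap.ker_eq_bot']
    intro v hv
    simp only [Matrix.mulVecLin_apply] at hv
    have hv' : M.mulVec (Sum.elim (v ∘ Sum.inl) (v ∘ Sum.inr)) = 0 := by
      rwa [Sum.elim_comp_inl_inr]
    rw [hM, Matrix.fromBlocks_mulVec] at hv'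
    have h2 : (0 : Matrix (Fin r × Fin l) (Fin n) ℝ).mulVec (v ∘ Sum.inl) +
        (1 : Matrix (Fin r × Fin l) (Fin r × Fin l) ℝ).mulVec (v ∘ Sum.inr) = 0 := by
      have := congrArg (fun f => f ∘ Sum.inr) hv'
      funext q; exact congrFun this q
    rw [Matrix.zero_mulVec, zero_add, Matrix.one_mulVec] at h2
    have h1 : (ObsMat r (E + F * H) H).mulVec (v ∘ Sum.inl) +
        (ToepMat r (E + F * H) G H).mulVec (v ∘ Sum.inr) = 0 := by
      have := congrArg (fun f => f ∘ Sum.inl) hv'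
      funext q; exact congrFun this q
    rw [h2, Matrix.mulVec_zero, add_zero] at h1
    have hv1 : v ∘ Sum.inl = 0 := by
      apply hAinj
      simpa [Matrix.mulVecLin_apply] using h1
    funext i
    cases i with
    | inl j => exact congrFun hv1 j
    | inr q => exact congrFun h2 q
  have hfact := data_factor htraj r c t
  have hrank : (dataMat u y r c t).rank = (stateMat xh y r c t).rank := by
    rw [hfact]
    exact rank_mul_eq_of_inj _ _ hMinj
  have hnle : n ≤ r * m := by
    have := (ObsMat r (E + F * H) H).rank_le_card_height
    rw [hobs, Fintype.card_prod, Fintype.card_fin, Fintype.card_fin] at this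
    exact this
  rw [hrank, hN]
  have : n + l * r ≤ (m + l) * r := by nlinarith
  omega

end LQGPaper
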